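/- arXiv:2004.03419 — 3 statements merged into one kernel-verified Lean document; each statement's English description precedes it below -/
import Mathlib

section
/- (Martingale characterization via small conditional increments.) Let (Ω, 𝒜, (ℱ_t), P) be a filtered probability space, T > 0, and let X : [0,T] × Ω → ℝ be an adapted process such that X_t is integrable for each t and t ↦ X_t is continuous in L¹ (i.e. E[|X_s − X_t|] → 0 as s → t). Suppose that for every s ∈ [0,T) and every ε > 0 there exists δ > 0 such that E[|E[X_{s+h} − X_s | ℱ_s]|] ≤ ε h for all h ∈ (0, δ) with s + h ≤ T. Then X is a martingale: for all 0 ≤ s ≤ t ≤ T, E[X_t | ℱ_s] = X_s almost surely. -/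
open MeasureTheory Set Filter Topology

/-- Martingale characterization via small conditional increments: an
adapted, integrable, `L¹`-continuous process whose conditional increments satisfy
`E[|E[X_{s+h} − X_s | ℱ_s]|] ≤ ε h` for small `h` is a martingale on `[0,T]`. -/
theorem stmt_10
    {Ω : Type*} {m : MeasurableSpace Ω} (P : Measure Ω) [IsProbabilityMeasure P]
    (ℱ : MeasureTheory.Filtration ℝ m)
    (T : ℝ) (hT : 0 < T) (X : ℝ → Ω → ℝ)
    (hadapted : MeasureTheory.Adapted ℱ X)
    (hint : ∀ t : ℝ, Integrable (X t) P)
    (hL1cont : ∀ t ∈ Set.Icc (0:ℝ) T,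
      Filter.Tendsto (fun s => ∫ ω, |X s ω - X t ω| ∂P) (𝓝[Set.Icc (0:ℝ) T] t) (𝓝 0))
    (hsmall : ∀ s ∈ Set.Ico (0:ℝ) T, ∀ ε > (0:ℝ), ∃ δ > (0:ℝ),
      ∀ h ∈ Set.Ioo (0:ℝ) δ, s + h ≤ T →
        ∫ ω, |(P[(fun ω' => X (s + h) ω' - X s ω') | ℱ s]) ω| ∂P ≤ ε * h) :
    ∀ s t : ℝ, 0 ≤ s → s ≤ t → t ≤ T → P[X t | ℱ s] =ᵐ[P] X s := by
  intro s t hs hst htT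
  have hXs : P[X s | ℱ s] = X s :=
    condExp_of_stronglyMeasurable (ℱ.le s) (hadapted s).stronglyMeasurable (hint s)
  rcases eq_or_lt_of_le hst with rfl | hlt
  · exact Eventually.of_forall (fun ω => congrFun hXs ω)
  have hsT : s ≤ T := hst.trans htT
  -- the L¹ norm of the conditional increment
  set g : ℝ → ℝ := fun u => ∫ ω, |(P[(fun ω' => X u ω' - X s ω') | ℱ s]) ω| ∂P with hgdef
  have hgint : ∀ u : ℝ, Integrable (fun ω' => X u ω' - X s ω') P :=
    fun u => (hint u).sub (hint s)
  -- basic estimate : g u ≤ g v + ∫ |X u - X v|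
  have key : ∀ u v : ℝ, g u ≤ g v + ∫ ω, |X u ω - X v ω| ∂P := by
    intro u v
    have hsplit : P[(fun ω' => X u ω' - X s ω') | ℱ s]
        =ᵐ[P] P[(fun ω' => X v ω' - X s ω') | ℱ s]
          + P[(fun ω' => X u ω' - X v ω') | ℱ s] := by
      refine (condExp_congr_ae ?_).trans
        (condExp_add (m := ℱ s) (μ := P) (hgint v) ((hint u).sub (hint v)))
      refine Eventually.of_forall (fun ω => ?_)
      show X u ω - X s ω = (X v ω - X s ω) + (X u ω - X v ω)
      ring
    have h1 : g u ≤ ∫ ω, (|(P[(fun ω' => X v ω' - X s ω') | ℱ s]) ω|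
        + |(P[(fun ω' => X u ω' - X v ω') | ℱ s]) ω|) ∂P := by
      refine integral_mono_ae integrable_condExp.abs
        (integrable_condExp.abs.add integrable_condExp.abs) ?_
      filter_upwards [hsplit] with ω hω
      calc |(P[(fun ω' => X u ω' - X s ω') | ℱ s]) ω| = |(P[(fun ω' => X v ω' - X s ω') | ℱ s]) ω
          + (P[(fun ω' => X u ω' - X v ω') | ℱ s]) ω| := by rw [hω]; rfl
        _ ≤ _ := abs_add_le _ _
    rw [integral_add integrable_condExp.abs integrable_condExp.abs] at h1
    refine h1.trans (add_le_add_right ?_ _)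
    exact integral_abs_condExp_le _
  have habs_int : ∀ u v : ℝ, Integrable (fun ω => |X u ω - X v ω|) P :=
    fun u v => ((hint u).sub (hint v)).abs
  -- continuity of g on [s, t]
  have hgcont : ContinuousOn g (Icc s t) := by
    intro v hv
    have hvIcc : v ∈ Icc (0:ℝ) T := ⟨hs.trans hv.1, hv.2.trans htT⟩
    have hsub : Icc s t ⊆ Icc (0:ℝ) T := Icc_subset_Icc hs htT
    have hL : Tendsto (fun u => ∫ ω, |X u ω - X v ω| ∂P) (𝓝[Icc s t] v) (𝓝 0) :=
      (hL1cont v hvIcc).mono_left (nhdsWithin_mono v hsub)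
    have hdiff : Tendsto (fun u => g u - g v) (𝓝[Icc s t] v) (𝓝 0) := by
      refine squeeze_zero_norm (fun u => ?_) hL
      have h1 : g u - g v ≤ ∫ ω, |X u ω - X v ω| ∂P := by
        have := key u v; linarith
      have h2 : g v - g u ≤ ∫ ω, |X u ω - X v ω| ∂P := by
        have := key v u
        have heq : ∫ ω, |X v ω - X u ω| ∂P = ∫ ω, |X u ω - X v ω| ∂P := by
          exact integral_congr_ae (Eventually.of_forall fun ω => abs_sub_comm _ _)
        linarith
      rw [Real.norm_eq_abs, abs_sub_le_iff]
      exact ⟨h1, h2⟩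
    have : Tendsto g (𝓝[Icc s t] v) (𝓝 (0 + g v)) := by
      simpa using hdiff.add_const (g v)
    simpa [ContinuousWithinAt] using this
  have hgs : g s = 0 := by
    have h0 : (fun ω' => X s ω' - X s ω') = (fun _ : Ω => (0:ℝ)) := by
      funext ω'; ring
    have h1 : P[(fun _ : Ω => (0:ℝ)) | ℱ s] = 0 := condExp_zero
    simp only [hgdef, h0, h1, Pi.zero_apply, abs_zero, integral_zero]
  -- for each ε > 0, g t ≤ ε * (t - s)
  have hmain : ∀ ε > (0:ℝ), g t ≤ ε * (t - s) := by
    intro ε hε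
    have := image_le_of_liminf_slope_right_le_deriv_boundary (f := g) (a := s) (b := t)
      hgcont (B := fun u => ε * (u - s)) (B' := fun _ => ε)
      (by simp [hgs]) (by fun_prop)
      (fun x _ => by simpa using (((hasDerivAt_id x).sub_const s).const_mul ε).hasDerivWithinAt)
      ?_ (right_mem_Icc.2 hst)
    · simpa using this
    intro x hx r hr
    -- x ∈ [s, t), need frequently slope g x z < r
    have hx0T : x ∈ Ico (0:ℝ) T := ⟨hs.trans hx.1, lt_of_lt_of_le hx.2 htT⟩
    obtain ⟨δ, hδ, hδbound⟩ := hsmall x hx0T ε hε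
    have hslope : ∀ z ∈ Ioo x (min (x + δ) t), slope g x z < r := by
      intro z hz
      have hzx : 0 < z - x := sub_pos.2 hz.1
      have hzδ : z - x < δ := by
        have := hz.2.trans_le (min_le_left _ _); linarith
      have hzT : z ≤ T := le_trans (hz.2.trans_le (min_le_right _ _)).le htT
      -- tower property estimate
      have htower : ∫ ω, |(P[(fun ω' => X z ω' - X x ω') | ℱ s]) ω| ∂P ≤ ε * (z - x) := by
        have heq : P[(fun ω' => X z ω' - X x ω') | ℱ s]
            =ᵐ[P] P[P[(fun ω' => X z ω' - X x ω') | ℱ x] | ℱ s] :=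
          (condExp_condExp_of_le (ℱ.mono hx.1) (ℱ.le x)).symm
        have h1 : ∫ ω, |(P[(fun ω' => X z ω' - X x ω') | ℱ s]) ω| ∂P
            = ∫ ω, |(P[P[(fun ω' => X z ω' - X x ω') | ℱ x] | ℱ s]) ω| ∂P := by
          refine integral_congr_ae ?_
          filter_upwards [heq] with ω hω using by rw [hω]
        rw [h1]
        refine (integral_abs_condExp_le _).trans ?_
        have := hδbound (z - x) ⟨hzx, hzδ⟩ (by linarith)
        simpa [add_sub_cancel] using this
      have hgz : g z ≤ g x + ε * (z - x) := by
        have hsplit : P[(fun ω' => X z ω' - X s ω') | ℱ s]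
            =ᵐ[P] P[(fun ω' => X x ω' - X s ω') | ℱ s]
              + P[(fun ω' => X z ω' - X x ω') | ℱ s] := by
          refine (condExp_congr_ae ?_).trans
            (condExp_add (m := ℱ s) (μ := P) (hgint x) ((hint z).sub (hint x)))
          refine Eventually.of_forall (fun ω => ?_)
          show X z ω - X s ω = (X x ω - X s ω) + (X z ω - X x ω)
          ring
        have h1 : g z ≤ ∫ ω, (|(P[(fun ω' => X x ω' - X s ω') | ℱ s]) ω|
            + |(P[(fun ω' => X z ω' - X x ω') | ℱ s]) ω|) ∂P := by
          refine integral_mono_ae integrable_condExp.abs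
            (integrable_condExp.abs.add integrable_condExp.abs) ?_
          filter_upwards [hsplit] with ω hω
          calc |(P[(fun ω' => X z ω' - X s ω') | ℱ s]) ω|
              = |(P[(fun ω' => X x ω' - X s ω') | ℱ s]) ω
                + (P[(fun ω' => X z ω' - X x ω') | ℱ s]) ω| := by rw [hω]; rfl
            _ ≤ _ := abs_add_le _ _
        rw [integral_add integrable_condExp.abs integrable_condExp.abs] at h1
        linarith [htower]
      rw [slope_def_field, div_lt_iff₀ hzx]
      calc g z - g x ≤ ε * (z - x) := by linarith
        _ < r * (z - x) := by nlinarith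
    have hmem : Ioo x (min (x + δ) t) ∈ 𝓝[>] x :=
      Ioo_mem_nhdsGT_of_mem ⟨le_refl x, lt_min (by linarith) hx.2⟩
    exact ((eventually_iff_exists_mem.2 ⟨_, hmem, hslope⟩).frequently)
  -- conclude g t = 0
  have hgt0 : g t = 0 := by
    have hub : g t ≤ 0 := by
      by_contra hgt
      push_neg at hgt
      have hts : 0 < t - s := sub_pos.2 hlt
      have := hmain (g t / (2 * (t - s))) (by positivity)
      have heq : g t / (2 * (t - s)) * (t - s) = g t / 2 := by
        field_simp
      rw [heq] at this
      linarith
    have hlb : 0 ≤ g t :=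
      integral_nonneg (fun ω => abs_nonneg _)
    linarith
  -- hence the conditional increment vanishes a.e.
  have hzero : P[(fun ω' => X t ω' - X s ω') | ℱ s] =ᵐ[P] 0 := by
    have habs : (fun ω => |(P[(fun ω' => X t ω' - X s ω') | ℱ s]) ω|) =ᵐ[P] 0 := by
      rw [← integral_eq_zero_iff_of_nonneg (fun ω => abs_nonneg _) integrable_condExp.abs]
      exact hgt0
    filter_upwards [habs] with ω hω
    have : |(P[(fun ω' => X t ω' - X s ω') | ℱ s]) ω| = 0 := hω
    simpa [abs_eq_zero] using this
  have hsub : P[(fun ω' => X t ω' - X s ω') | ℱ s]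
      =ᵐ[P] P[X t | ℱ s] - P[X s | ℱ s] :=
    condExp_sub (hint t) (hint s) (ℱ s)
  filter_upwards [hzero, hsub] with ω h0 hsb
  have : (P[X t | ℱ s]) ω - (P[X s | ℱ s]) ω = 0 := by
    have := hsb.symm.trans h0
    simpa using this
  have hXsω : (P[X s | ℱ s]) ω = X s ω := congrFun hXs ω
  linarith [this, hXsω.le]
end

section
/- (A pathological function of bounded variation.) There exists a continuous function f : [0,1] → [0,∞) with f(0) = 0 such that f has bounded total variation on [0,1], f(h)/h → 0 as h → 0+, and yet limsup_{h → 0+} TV(f)_{0,h}/h = ∞ (in particular TV(f)_{0,h}/h is unbounded as h → 0+). -/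
open Finset Set

namespace Stmt12

/-- unit ramp: 0 for `x ≤ l`, linear on `[l, l+w]`, 1 for `x ≥ l+w`. -/
noncomputable def ramp (l w x : ℝ) : ℝ := max 0 (min 1 ((x - l) / w))

lemma ramp_nonneg (l w x : ℝ) : 0 ≤ ramp l w x := le_max_left _ _

lemma ramp_le_one (l w x : ℝ) : ramp l w x ≤ 1 :=
  max_le zero_le_one (min_le_left _ _)

lemma ramp_eq_zero {l w x : ℝ} (hw : 0 < w) (h : x ≤ l) : ramp l w x = 0 := by
  have : (x - l) / w ≤ 0 := div_nonpos_of_nonpos_of_nonneg (by linarith) hw.le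
  have : min 1 ((x - l)/w) ≤ 0 := le_trans (min_le_right _ _) this
  simp [ramp, max_eq_left this]

lemma ramp_eq_one {l w x : ℝ} (hw : 0 < w) (h : l + w ≤ x) : ramp l w x = 1 := by
  have h1 : (1:ℝ) ≤ (x - l) / w := (le_div_iff₀ hw).2 (by linarith)
  simp [ramp, min_eq_left h1]

lemma ramp_mono (l w : ℝ) (hw : 0 < w) : Monotone (ramp l w) := by
  intro x y hxy
  exact max_le_max le_rfl (min_le_min le_rfl (by gcongr))

lemma ramp_anti {l l' : ℝ} (w : ℝ) (hw : 0 < w) (h : l ≤ l') (x : ℝ) :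
    ramp l' w x ≤ ramp l w x :=
  max_le_max le_rfl (min_le_min le_rfl (by gcongr))

lemma ramp_continuous (l w : ℝ) : Continuous (ramp l w) := by
  unfold ramp; fun_prop

/-- number of spikes in group `n` -/
def kk (n : ℕ) : ℕ := (n+1)^3
/-- spike height in group `n` -/
noncomputable def eps (n : ℕ) : ℝ := (1/2)^n / (n+1)^2
/-- left endpoint of group `n`'s interval -/
noncomputable def aa (n : ℕ) : ℝ := (1/2)^(n+1)
/-- half-width of one spike -/
noncomputable def ww (n : ℕ) : ℝ := (1/2)^(n+1) / (2*(n+1)^3)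
/-- start of spike `j` in group `n` -/
noncomputable def ll (n j : ℕ) : ℝ := aa n + j * (2 * ww n)

lemma kk_pos (n : ℕ) : 0 < kk n := pow_pos (Nat.succ_pos n) 3
lemma eps_pos (n : ℕ) : 0 < eps n := by
  unfold eps
  apply div_pos (by positivity)
  positivity
lemma aa_pos (n : ℕ) : 0 < aa n := by unfold aa; positivity
lemma ww_pos (n : ℕ) : 0 < ww n := by unfold ww; positivity

lemma total_width (n : ℕ) : aa n + (kk n) * (2 * ww n) = (1/2)^n := by
  unfold aa ww kk
  have h : ((n:ℝ)+1)^3 ≠ 0 := by positivity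
  push_cast
  field_simp
  ring

lemma ll_mono (n : ℕ) {i j : ℕ} (h : i ≤ j) : ll n i ≤ ll n j := by
  unfold ll
  have := ww_pos n
  have : (i:ℝ) ≤ j := by exact_mod_cast h
  nlinarith [ww_pos n]

lemma ll_succ (n j : ℕ) : ll n (j+1) = ll n j + 2 * ww n := by
  unfold ll; push_cast; ring

lemma aa_le_ll (n j : ℕ) : aa n ≤ ll n j := by
  unfold ll
  nlinarith [ww_pos n, Nat.cast_nonneg (α := ℝ) j]

lemma ll_le_bb {n j : ℕ} (h : j ≤ kk n) : ll n j ≤ (1/2)^n := by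
  rw [← total_width n]
  exact ll_mono n h

noncomputable def Fn (n : ℕ) (x : ℝ) : ℝ :=
  eps n * ∑ j ∈ Finset.range (kk n), ramp (ll n j) (ww n) x

noncomputable def Gn (n : ℕ) (x : ℝ) : ℝ :=
  eps n * ∑ j ∈ Finset.range (kk n), ramp (ll n j + ww n) (ww n) x

noncomputable def f (x : ℝ) : ℝ := (∑' n, Fn n x) - (∑' n, Gn n x)

lemma Fn_nonneg (n : ℕ) (x : ℝ) : 0 ≤ Fn n x :=
  mul_nonneg (eps_pos n).le (Finset.sum_nonneg fun j _ => ramp_nonneg _ _ _)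

lemma Gn_nonneg (n : ℕ) (x : ℝ) : 0 ≤ Gn n x :=
  mul_nonneg (eps_pos n).le (Finset.sum_nonneg fun j _ => ramp_nonneg _ _ _)

lemma eps_mul_kk (n : ℕ) : eps n * kk n = ((n:ℝ)+1) * (1/2)^n := by
  unfold eps kk
  have h : ((n:ℝ)+1)^2 ≠ 0 := by positivity
  push_cast
  field_simp

lemma Fn_le (n : ℕ) (x : ℝ) : Fn n x ≤ ((n:ℝ)+1) * (1/2)^n := by
  rw [← eps_mul_kk]
  unfold Fn
  gcongr
  · exact (eps_pos n).le
  · calc ∑ j ∈ Finset.range (kk n), ramp (ll n j) (ww n) x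
        ≤ ∑ _j ∈ Finset.range (kk n), (1:ℝ) := Finset.sum_le_sum fun j _ => ramp_le_one _ _ _
      _ = kk n := by simp

lemma Gn_le (n : ℕ) (x : ℝ) : Gn n x ≤ ((n:ℝ)+1) * (1/2)^n := by
  rw [← eps_mul_kk]
  unfold Gn
  gcongr
  · exact (eps_pos n).le
  · calc ∑ j ∈ Finset.range (kk n), ramp (ll n j + ww n) (ww n) x
        ≤ ∑ _j ∈ Finset.range (kk n), (1:ℝ) := Finset.sum_le_sum fun j _ => ramp_le_one _ _ _
      _ = kk n := by simp

lemma summable_bound : Summable (fun n : ℕ => ((n:ℝ)+1) * (1/2)^n) := by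
  have h1 : Summable (fun n : ℕ => (n:ℝ) * (1/2)^n) := by
    simpa using summable_pow_mul_geometric_of_norm_lt_one (R := ℝ) (k := 1) (r := 1/2) (by norm_num)
  have h2 : Summable (fun n : ℕ => ((1:ℝ)/2)^n) := summable_geometric_of_lt_one (by norm_num) (by norm_num)
  simpa [add_mul] using h1.add h2

lemma summable_Fn (x : ℝ) : Summable (fun n => Fn n x) :=
  Summable.of_nonneg_of_le (fun n => Fn_nonneg n x) (fun n => Fn_le n x) summable_bound

lemma summable_Gn (x : ℝ) : Summable (fun n => Gn n x) :=
  Summable.of_nonneg_of_le (fun n => Gn_nonneg n x) (fun n => Gn_le n x) summable_bound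


/-! ### support lemmas -/

lemma Fn_eq_zero {n : ℕ} {x : ℝ} (h : x ≤ aa n) : Fn n x = 0 := by
  unfold Fn
  rw [Finset.sum_eq_zero, mul_zero]
  intro j _
  exact ramp_eq_zero (ww_pos n) (h.trans (aa_le_ll n j))

lemma Gn_eq_zero {n : ℕ} {x : ℝ} (h : x ≤ aa n) : Gn n x = 0 := by
  unfold Gn
  rw [Finset.sum_eq_zero, mul_zero]
  intro j _
  exact ramp_eq_zero (ww_pos n) (by nlinarith [aa_le_ll n j, ww_pos n])

lemma ll_add_two_ww {n j : ℕ} (hj : j < kk n) : ll n j + 2 * ww n ≤ (1/2)^n := by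
  rw [← ll_succ]
  exact ll_le_bb hj

lemma Fn_eq_full {n : ℕ} {x : ℝ} (h : (1/2:ℝ)^n ≤ x) : Fn n x = eps n * kk n := by
  unfold Fn
  congr 1
  rw [Finset.sum_congr rfl (fun j hj => ramp_eq_one (ww_pos n) ?_)]
  · simp
  · have := ll_add_two_ww (Finset.mem_range.1 hj)
    nlinarith [ww_pos n]

lemma Gn_eq_full {n : ℕ} {x : ℝ} (h : (1/2:ℝ)^n ≤ x) : Gn n x = eps n * kk n := by
  unfold Gn
  congr 1
  rw [Finset.sum_congr rfl (fun j hj => ramp_eq_one (ww_pos n) ?_)]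
  · simp
  · have := ll_add_two_ww (Finset.mem_range.1 hj)
    nlinarith [ww_pos n]

lemma Gn_le_Fn (n : ℕ) (x : ℝ) : Gn n x ≤ Fn n x := by
  unfold Fn Gn
  gcongr with j hj
  · exact (eps_pos n).le
  · exact ramp_anti (ww n) (ww_pos n) (by nlinarith [ww_pos n]) x

lemma f_eq_tsum (x : ℝ) : f x = ∑' n, (Fn n x - Gn n x) := by
  rw [f, ← Summable.tsum_sub (summable_Fn x) (summable_Gn x)]

lemma f_nonneg (x : ℝ) : 0 ≤ f x := by
  rw [f_eq_tsum]
  exact tsum_nonneg fun n => sub_nonneg.2 (Gn_le_Fn n x)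

/-- localization: in group `n`'s zone, `f` is just the `n`-th tent sum. -/
lemma f_loc {n : ℕ} {x : ℝ} (h1 : aa n ≤ x) (h2 : x ≤ (1/2:ℝ)^n) :
    f x = Fn n x - Gn n x := by
  rw [f_eq_tsum]
  apply tsum_eq_single
  intro m hm
  rcases lt_or_gt_of_ne hm with hlt | hgt
  · -- m < n : group m lives to the right of x; here x ≤ aa m
    have : x ≤ aa m := by
      refine h2.trans ?_
      unfold aa
      apply pow_le_pow_of_le_one (by norm_num) (by norm_num)
      omega
    rw [Fn_eq_zero this, Gn_eq_zero this, sub_self]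
  · -- m > n : group m lives to the left of x; here (1/2)^m ≤ x
    have : (1/2:ℝ)^m ≤ x := by
      refine le_trans ?_ h1
      unfold aa
      apply pow_le_pow_of_le_one (by norm_num) (by norm_num)
      omega
    rw [Fn_eq_full this, Gn_eq_full this, sub_self]

/-- telescoping: the `n`-th tent sum is at most `eps n`. -/
lemma tent_sum_le (n : ℕ) (x : ℝ) (k : ℕ) :
    ∑ j ∈ Finset.range (k+1),
      (ramp (ll n j) (ww n) x - ramp (ll n j + ww n) (ww n) x)
      ≤ 1 - ramp (ll n k + ww n) (ww n) x := by
  induction k with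
  | zero => simp [ramp_le_one]
  | succ k ih =>
    rw [Finset.sum_range_succ]
    have key : ramp (ll n (k+1)) (ww n) x ≤ ramp (ll n k + ww n) (ww n) x := by
      apply ramp_anti (ww n) (ww_pos n) _ x
      rw [ll_succ]; nlinarith [ww_pos n]
    linarith

lemma Dn_le (n : ℕ) (x : ℝ) : Fn n x - Gn n x ≤ eps n := by
  unfold Fn Gn
  rw [← mul_sub, ← Finset.sum_sub_distrib]
  have hk : kk n = (kk n - 1) + 1 := (Nat.succ_pred_eq_of_pos (kk_pos n)).symm
  have := tent_sum_le n x (kk n - 1)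
  rw [← hk] at this
  have h2 : ∑ j ∈ Finset.range (kk n),
      (ramp (ll n j) (ww n) x - ramp (ll n j + ww n) (ww n) x) ≤ 1 :=
    this.trans (by linarith [ramp_nonneg (ll n (kk n - 1) + ww n) (ww n) x])
  nlinarith [eps_pos n]


lemma f_le_eps {n : ℕ} {x : ℝ} (h1 : aa n ≤ x) (h2 : x ≤ (1/2:ℝ)^n) : f x ≤ eps n :=
  (f_loc h1 h2).le.trans (Dn_le n x)

/-! ### exact values at nodes -/

lemma f_at_ll {n j : ℕ} (hj : j ≤ kk n) : f (ll n j) = 0 := by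
  rw [f_loc (aa_le_ll n j) (ll_le_bb hj)]
  unfold Fn Gn
  rw [← mul_sub, ← Finset.sum_sub_distrib, Finset.sum_eq_zero, mul_zero]
  intro i hi
  rcases lt_or_ge i j with h | h
  · -- i < j : both ramps are 1
    have hx : ll n i + ww n + ww n ≤ ll n j := by
      have : ll n (i+1) ≤ ll n j := ll_mono n h
      rw [ll_succ] at this; linarith
    rw [ramp_eq_one (ww_pos n) (by linarith [ww_pos n]), ramp_eq_one (ww_pos n) (by linarith [ww_pos n]), sub_self]
  · -- i ≥ j : both ramps are 0
    have hx : ll n j ≤ ll n i := ll_mono n h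
    rw [ramp_eq_zero (ww_pos n) hx, ramp_eq_zero (ww_pos n) (by nlinarith [ww_pos n]), sub_self]

lemma f_at_mid {n j : ℕ} (hj : j < kk n) : f (ll n j + ww n) = eps n := by
  have hmem : aa n ≤ ll n j + ww n := by nlinarith [aa_le_ll n j, ww_pos n]
  have hmem2 : ll n j + ww n ≤ (1/2:ℝ)^n := by nlinarith [ll_add_two_ww hj, ww_pos n]
  rw [f_loc hmem hmem2]
  unfold Fn Gn
  rw [← mul_sub, ← Finset.sum_sub_distrib]
  rw [Finset.sum_eq_single j, ramp_eq_one (ww_pos n) le_rfl,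
    ramp_eq_zero (ww_pos n) le_rfl, mul_comm]
  · ring
  · intro i hi hne
    rcases lt_or_gt_of_ne hne with h | h
    · have hx : ll n i + ww n + ww n ≤ ll n j := by
        have : ll n (i+1) ≤ ll n j := ll_mono n h
        rw [ll_succ] at this; linarith
      rw [ramp_eq_one (ww_pos n) (by linarith [ww_pos n]), ramp_eq_one (ww_pos n) (by linarith [ww_pos n]), sub_self]
    · have hx : ll n j + 2 * ww n ≤ ll n i := by
        have : ll n (j+1) ≤ ll n i := ll_mono n h
        rw [ll_succ] at this; linarith
      rw [ramp_eq_zero (ww_pos n) (by linarith [ww_pos n]), ramp_eq_zero (ww_pos n) (by linarith [ww_pos n]), sub_self]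
  · intro h
    exact absurd (Finset.mem_range.2 hj) h

/-! ### regularity of the sums -/

lemma Fn_mono (n : ℕ) : Monotone (Fn n) := by
  intro x y hxy
  unfold Fn
  gcongr with j hj
  · exact (eps_pos n).le
  · exact ramp_mono _ _ (ww_pos n) hxy

lemma Gn_mono (n : ℕ) : Monotone (Gn n) := by
  intro x y hxy
  unfold Gn
  gcongr with j hj
  · exact (eps_pos n).le
  · exact ramp_mono _ _ (ww_pos n) hxy

lemma Fn_continuous (n : ℕ) : Continuous (Fn n) := by
  unfold Fn
  exact continuous_const.mul (continuous_finset_sum _ fun j _ => ramp_continuous _ _)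

lemma Gn_continuous (n : ℕ) : Continuous (Gn n) := by
  unfold Gn
  exact continuous_const.mul (continuous_finset_sum _ fun j _ => ramp_continuous _ _)

noncomputable def Fsum (x : ℝ) : ℝ := ∑' n, Fn n x
noncomputable def Gsum (x : ℝ) : ℝ := ∑' n, Gn n x

lemma f_eq (x : ℝ) : f x = Fsum x - Gsum x := rfl

lemma Fsum_mono : Monotone Fsum := fun x y hxy =>
  Summable.tsum_le_tsum (fun n => Fn_mono n hxy) (summable_Fn x) (summable_Fn y)

lemma Gsum_mono : Monotone Gsum := fun x y hxy =>
  Summable.tsum_le_tsum (fun n => Gn_mono n hxy) (summable_Gn x) (summable_Gn y)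

lemma Fsum_continuous : Continuous Fsum := by
  unfold Fsum
  apply continuous_tsum Fn_continuous summable_bound
  intro n x
  rw [Real.norm_eq_abs, abs_of_nonneg (Fn_nonneg n x)]
  exact Fn_le n x

lemma Gsum_continuous : Continuous Gsum := by
  unfold Gsum
  apply continuous_tsum Gn_continuous summable_bound
  intro n x
  rw [Real.norm_eq_abs, abs_of_nonneg (Gn_nonneg n x)]
  exact Gn_le n x

lemma f_continuous : Continuous f := Fsum_continuous.sub Gsum_continuous

lemma f_zero : f 0 = 0 := by
  rw [f_eq]
  have h1 : Fsum 0 = 0 := by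
    unfold Fsum
    rw [tsum_congr (fun n => Fn_eq_zero (aa_pos n).le)]
    exact tsum_zero
  have h2 : Gsum 0 = 0 := by
    unfold Gsum
    rw [tsum_congr (fun n => Gn_eq_zero (aa_pos n).le)]
    exact tsum_zero
  rw [h1, h2, sub_self]


/-! ### bounded variation -/

lemma evar_sub_le (F G : ℝ → ℝ) (s : Set ℝ) :
    eVariationOn (fun x => F x - G x) s ≤ eVariationOn F s + eVariationOn G s := by
  refine iSup_le ?_
  rintro ⟨n, u, hu, us⟩
  calc ∑ i ∈ Finset.range n, edist (F (u (i+1)) - G (u (i+1))) (F (u i) - G (u i))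
      ≤ ∑ i ∈ Finset.range n, (edist (F (u (i+1))) (F (u i)) + edist (G (u (i+1))) (G (u i))) := by
        refine Finset.sum_le_sum fun i _ => ?_
        simpa [sub_eq_add_neg, edist_neg_neg] using
          edist_add_add_le (F (u (i+1))) (-G (u (i+1))) (F (u i)) (-G (u i))
    _ = (∑ i ∈ Finset.range n, edist (F (u (i+1))) (F (u i)))
        + ∑ i ∈ Finset.range n, edist (G (u (i+1))) (G (u i)) := Finset.sum_add_distrib
    _ ≤ _ := add_le_add (eVariationOn.sum_le (f := F) (n := n) hu us) (eVariationOn.sum_le (f := G) (n := n) hu us)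

lemma f_bv : eVariationOn f (Set.Icc 0 1) ≠ ⊤ := by
  have h01 : (0:ℝ) ∈ Set.Icc (0:ℝ) 1 := by simp
  have h11 : (1:ℝ) ∈ Set.Icc (0:ℝ) 1 := by simp
  have hF : eVariationOn Fsum (Set.Icc 0 1) ≤ ENNReal.ofReal (Fsum 1 - Fsum 0) := by
    have := (Fsum_mono.monotoneOn (Set.Icc 0 1)).eVariationOn_le h01 h11
    simpa using this
  have hG : eVariationOn Gsum (Set.Icc 0 1) ≤ ENNReal.ofReal (Gsum 1 - Gsum 0) := by
    have := (Gsum_mono.monotoneOn (Set.Icc 0 1)).eVariationOn_le h01 h11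
    simpa using this
  have hfsub : eVariationOn f (Set.Icc 0 1)
      ≤ eVariationOn Fsum (Set.Icc 0 1) + eVariationOn Gsum (Set.Icc 0 1) :=
    evar_sub_le Fsum Gsum _
  exact ((hfsub.trans (add_le_add hF hG)).trans_lt
    (ENNReal.add_lt_top.2 ⟨ENNReal.ofReal_lt_top, ENNReal.ofReal_lt_top⟩)).ne

/-! ### f(h)/h → 0 -/

lemma eps_div_aa (n : ℕ) : eps n / aa n = 2 / ((n:ℝ)+1)^2 := by
  unfold eps aa
  rw [pow_succ]
  have h1 : ((1:ℝ)/2)^n ≠ 0 := by positivity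
  have h2 : ((n:ℝ)+1)^2 ≠ 0 := by positivity
  field_simp
  ring

lemma f_tendsto : Filter.Tendsto (fun h => f h / h) (nhdsWithin 0 (Set.Ioi 0)) (nhds 0) := by
  rw [Metric.tendsto_nhdsWithin_nhds]
  intro ε hε
  obtain ⟨N, hN⟩ := exists_nat_gt (2/ε)
  refine ⟨(1/2)^N, by positivity, ?_⟩
  intro x hx hdist
  rw [Real.dist_eq, sub_zero] at hdist
  have hx0 : 0 < x := hx
  have hxN : x < (1/2)^N := lt_of_abs_lt hdist
  -- find the group containing x
  have hex : ∃ m, (1/2:ℝ)^(m+1) ≤ x := by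
    obtain ⟨m, hm⟩ := exists_pow_lt_of_lt_one hx0 (by norm_num : (1/2:ℝ) < 1)
    exact ⟨m, le_trans (pow_le_pow_of_le_one (by norm_num) (by norm_num) (Nat.le_succ m)) hm.le⟩
  set n := Nat.find hex with hn_def
  have hn : (1/2:ℝ)^(n+1) ≤ x := Nat.find_spec hex
  have hnN : N ≤ n := by
    by_contra hcon
    push_neg at hcon
    have : (1/2:ℝ)^N ≤ (1/2)^(n+1) :=
      pow_le_pow_of_le_one (by norm_num) (by norm_num) (by omega)
    linarith
  have hxu : x ≤ (1/2:ℝ)^n := by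
    rcases Nat.eq_zero_or_pos n with h0 | h0
    · rw [h0, pow_zero]
      have : (1/2:ℝ)^N ≤ 1 := pow_le_one₀ (by norm_num) (by norm_num)
      linarith
    · have := Nat.find_min hex (m := n - 1) (by omega)
      push_neg at this
      have heq : n - 1 + 1 = n := by omega
      rw [heq] at this
      exact this.le
  have hfx : f x ≤ eps n := f_le_eps hn hxu
  have hfx0 : 0 ≤ f x := f_nonneg x
  rw [Real.dist_eq, sub_zero, abs_of_nonneg (by positivity)]
  have step1 : f x / x ≤ eps n / x := by gcongr
  have step2 : eps n / x ≤ eps n / aa n := by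
    apply div_le_div_of_nonneg_left (eps_pos n).le (aa_pos n) hn
  have step3 : eps n / aa n = 2 / ((n:ℝ)+1)^2 := eps_div_aa n
  have hNn : ((N:ℝ)+1) ≤ ((n:ℝ)+1) := by
    have : (N:ℝ) ≤ n := Nat.cast_le.2 hnN
    linarith
  have step4 : 2 / ((n:ℝ)+1)^2 ≤ 2 / ((N:ℝ)+1)^2 := by
    apply div_le_div_of_nonneg_left (by norm_num) (by positivity)
    nlinarith [Nat.cast_nonneg (α := ℝ) N]
  have step5 : 2 / ((N:ℝ)+1)^2 < ε := by
    rw [div_lt_iff₀ (by positivity)]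
    have hε2 : 2/ε < N := hN
    have : 2 < ε * N := by
      rw [div_lt_iff₀ hε] at hε2
      linarith [mul_comm ε (N:ℝ)]
    nlinarith [Nat.cast_nonneg (α := ℝ) N, hε.le]
  linarith


/-! ### unboundedness of TV(0,h)/h -/

lemma two_kk_eps (n : ℕ) : 2 * (kk n : ℝ) * eps n = 2 * ((n:ℝ)+1) * (1/2)^n := by
  have := eps_mul_kk n
  nlinarith [this]

lemma evar_lower (n : ℕ) :
    ENNReal.ofReal (2 * (kk n : ℝ) * eps n)
      ≤ eVariationOn f (Set.Icc 0 ((1/2:ℝ)^n)) := by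
  set u : ℕ → ℝ := fun i => aa n + i * ww n with hu_def
  have humono : MonotoneOn u (Set.Iic (2 * kk n)) := by
    intro i _ j _ hij
    simp only [hu_def]
    have : (i:ℝ) ≤ j := Nat.cast_le.2 hij
    nlinarith [ww_pos n]
  have humem : ∀ i ≤ 2 * kk n, u i ∈ Set.Icc (0:ℝ) ((1/2)^n) := by
    intro i hi
    constructor
    · simp only [hu_def]
      nlinarith [aa_pos n, ww_pos n, Nat.cast_nonneg (α := ℝ) i]
    · simp only [hu_def]
      have h1 : (i:ℝ) ≤ 2 * kk n := by exact_mod_cast hi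
      have := total_width n
      nlinarith [ww_pos n]
  have key := eVariationOn.sum_le_of_monotoneOn_Iic (f := f) humono humem
  refine le_trans ?_ key
  have hterm : ∀ i ∈ Finset.range (2 * kk n),
      edist (f (u (i+1))) (f (u i)) = ENNReal.ofReal (eps n) := by
    intro i hi
    have hi' : i < 2 * kk n := Finset.mem_range.1 hi
    rcases Nat.even_or_odd i with ⟨j, hj⟩ | ⟨j, hj⟩
    · -- i = 2j : u i = ll n j, u (i+1) = ll n j + ww n
      have hjk : j < kk n := by omega
      have hui : u i = ll n j := by
        simp only [hu_def, ll, hj]; push_cast; ring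
      have hui1 : u (i+1) = ll n j + ww n := by
        simp only [hu_def, ll, hj]; push_cast; ring
      rw [hui, hui1, f_at_ll hjk.le, f_at_mid hjk, edist_dist, Real.dist_eq, sub_zero,
        abs_of_nonneg (eps_pos n).le]
    · -- i = 2j+1 : u i = ll n j + ww n, u (i+1) = ll n (j+1)
      have hjk : j < kk n := by omega
      have hui : u i = ll n j + ww n := by
        simp only [hu_def, ll, hj]; push_cast; ring
      have hui1 : u (i+1) = ll n (j+1) := by
        simp only [hu_def, ll, hj]; push_cast; ring
      rw [hui, hui1, f_at_mid hjk, f_at_ll (by omega : j + 1 ≤ kk n), edist_dist,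
        Real.dist_eq, zero_sub, abs_neg, abs_of_nonneg (eps_pos n).le]
  rw [Finset.sum_congr rfl hterm, Finset.sum_const, Finset.card_range, nsmul_eq_mul]
  rw [show (2 * (kk n : ℝ)) * eps n = ((2 * kk n : ℕ) : ℝ) * eps n by push_cast; ring]
  rw [ENNReal.ofReal_mul (by positivity), ENNReal.ofReal_natCast]

lemma f_unbounded : ∀ C : ℝ, ∀ η > (0:ℝ), ∃ h ∈ Set.Ioo (0:ℝ) η,
    (eVariationOn f (Set.Icc 0 h)).toReal / h > C := by
  intro C η hη
  obtain ⟨n₀, hn₀⟩ := exists_pow_lt_of_lt_one hη (by norm_num : (1/2:ℝ) < 1)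
  obtain ⟨M, hM⟩ := exists_nat_gt (C/2)
  set n := max n₀ M with hn_def
  set h := (1/2:ℝ)^n with hh_def
  have hpos : 0 < h := by positivity
  have hlt : h < η := lt_of_le_of_lt
    (pow_le_pow_of_le_one (by norm_num) (by norm_num) (le_max_left n₀ M)) hn₀
  refine ⟨h, ⟨hpos, hlt⟩, ?_⟩
  have hsub : Set.Icc (0:ℝ) h ⊆ Set.Icc 0 1 := by
    apply Set.Icc_subset_Icc le_rfl
    exact pow_le_one₀ (by norm_num) (by norm_num)
  have hne : eVariationOn f (Set.Icc 0 h) ≠ ⊤ :=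
    fun hcontra => f_bv (top_le_iff.1 (hcontra ▸ eVariationOn.mono f hsub))
  have hlow := evar_lower n
  have htr : 2 * (kk n : ℝ) * eps n ≤ (eVariationOn f (Set.Icc 0 h)).toReal := by
    have := ENNReal.toReal_mono hne hlow
    rwa [ENNReal.toReal_ofReal (by nlinarith [eps_pos n, (Nat.cast_pos (α := ℝ)).2 (kk_pos n)])] at this
  rw [two_kk_eps] at htr
  have hnM : (M:ℝ) ≤ n := Nat.cast_le.2 (le_max_right n₀ M)
  have hCn : C < 2 * ((n:ℝ)+1) := by
    have : C/2 < M := hM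
    nlinarith
  rw [gt_iff_lt, lt_div_iff₀ hpos]
  calc C * h < 2 * ((n:ℝ)+1) * h := by nlinarith
    _ ≤ _ := by rw [hh_def] at htr ⊢; linarith

end Stmt12

open MeasureTheory Set Filter Topology

/-- A pathological function of bounded variation: there is a continuous
nonnegative `f : [0,1] → [0,∞)` with `f(0) = 0`, of bounded total variation on `[0,1]`,
with `f(h)/h → 0` as `h → 0+`, and yet `TV(f)_{0,h}/h` unbounded as `h → 0+`
(i.e. `limsup_{h→0+} TV(f)_{0,h}/h = ∞`). -/
theorem stmt_12 :
    ∃ f : ℝ → ℝ,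
      ContinuousOn f (Set.Icc 0 1) ∧
      f 0 = 0 ∧
      (∀ x ∈ Set.Icc (0:ℝ) 1, 0 ≤ f x) ∧
      eVariationOn f (Set.Icc 0 1) ≠ ⊤ ∧
      Filter.Tendsto (fun h => f h / h) (𝓝[>] (0:ℝ)) (𝓝 0) ∧
      (∀ C : ℝ, ∀ η > (0:ℝ), ∃ h ∈ Set.Ioo (0:ℝ) η,
        (eVariationOn f (Set.Icc 0 h)).toReal / h > C) := by
  exact ⟨Stmt12.f, Stmt12.f_continuous.continuousOn, Stmt12.f_zero,
    fun x _ => Stmt12.f_nonneg x, Stmt12.f_bv, Stmt12.f_tendsto, Stmt12.f_unbounded⟩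
end

section
/- (Mean-sense Fundamental Theorem of Stochastic Calculus, drift part.) Let (Ω, 𝒜, (ℱ_t), P) be a filtered probability space and T > 0. Let μ : [0,T] × Ω → ℝ be a jointly measurable adapted process with μ_u integrable for each u and t ↦ μ_t continuous in L¹ (i.e. E[|μ_s − μ_t|] → 0 as s → t). Let H : [0,T] × Ω → ℝ be a jointly measurable adapted process whose sample paths are almost surely continuous and which is uniformly bounded: |H_u(ω)| ≤ C for all u, ω. Then for each t ∈ [0,T), the random variables (1/h) E[∫_t^{t+h} (H_u − H_t) μ_u du | ℱ_t] converge to 0 in L¹ as h → 0+ (with t + h ≤ T). -/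
open MeasureTheory Set Filter Topology

/-- Auxiliary: integrability of a jointly measurable process on a product
`(volume.restrict s).prod P` given a uniform `L¹` bound on the slice integrals. -/
lemma aux_prod_integrable {Ω : Type*} {m : MeasurableSpace Ω} (P : Measure Ω)
    [IsProbabilityMeasure P] (μ : ℝ → Ω → ℝ) (hμmeas : Measurable (Function.uncurry μ))
    (hμint : ∀ u : ℝ, Integrable (μ u) P)
    (s : Set ℝ) (hs : MeasurableSet s) (hfin : volume s ≠ ⊤)
    (M : ℝ) (hM : ∀ u ∈ s, ∫ ω, |μ u ω| ∂P ≤ M) :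
    Integrable (fun p : ℝ × Ω => μ p.1 p.2) ((volume.restrict s).prod P) := by
  haveI : IsFiniteMeasure (volume.restrict s) :=
    ⟨by rwa [Measure.restrict_apply_univ, lt_top_iff_ne_top]⟩
  refine (integrable_prod_iff
    (f := fun p : ℝ × Ω => μ p.1 p.2) hμmeas.aestronglyMeasurable).mpr
    ⟨Eventually.of_forall fun u => hμint u, ?_⟩
  refine Integrable.mono' (integrable_const M)
    ?_ ?_
  · exact (StronglyMeasurable.integral_prod_right
      (f := fun u ω => ‖μ u ω‖) (hμmeas.norm.stronglyMeasurable)).aestronglyMeasurable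
  · refine (ae_restrict_iff' hs).2 (Eventually.of_forall fun u hu => ?_)
    have h1 : (0:ℝ) ≤ ∫ ω, ‖μ u ω‖ ∂P := integral_nonneg fun ω => norm_nonneg _
    rw [Real.norm_eq_abs, abs_of_nonneg h1]
    simpa [Real.norm_eq_abs] using hM u hu

/-- Mean-sense Fundamental Theorem of Stochastic Calculus, drift part:
for `μ` jointly measurable, adapted, integrable and `L¹`-continuous, and `H` jointly
measurable, adapted, uniformly bounded with a.s. continuous paths, the random variables
`(1/h) E[∫_t^{t+h} (H_u − H_t) μ_u du | ℱ_t]` converge to `0` in `L¹` as `h → 0+`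
(with `t + h ≤ T`), for each `t ∈ [0,T)`. -/
theorem stmt_14
    {Ω : Type*} {m : MeasurableSpace Ω} (P : Measure Ω) [IsProbabilityMeasure P]
    (ℱ : MeasureTheory.Filtration ℝ m)
    (T : ℝ) (hT : 0 < T)
    (μ : ℝ → Ω → ℝ)
    (hμmeas : Measurable (Function.uncurry μ))
    (hμadapted : MeasureTheory.Adapted ℱ μ)
    (hμint : ∀ u : ℝ, Integrable (μ u) P)
    (hμL1 : ∀ t ∈ Set.Icc (0:ℝ) T,
      Filter.Tendsto (fun s => ∫ ω, |μ s ω - μ t ω| ∂P) (𝓝[Set.Icc (0:ℝ) T] t) (𝓝 0))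
    (H : ℝ → Ω → ℝ)
    (hHmeas : Measurable (Function.uncurry H))
    (hHadapted : MeasureTheory.Adapted ℱ H)
    (hHcont : ∀ᵐ ω ∂P, ContinuousOn (fun u => H u ω) (Set.Icc 0 T))
    (C : ℝ) (hHbd : ∀ (u : ℝ) (ω : Ω), |H u ω| ≤ C) :
    ∀ t ∈ Set.Ico (0:ℝ) T,
      Filter.Tendsto
        (fun h : ℝ =>
          (∫ ω, |(P[(fun ω' => ∫ u in t..(t + h), (H u ω' - H t ω') * μ u ω') | ℱ t]) ω| ∂P) / h)
        (𝓝[Set.Ioc (0:ℝ) (T - t)] 0) (𝓝 0) := by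
  intro t ht
  obtain ⟨ht0, htT⟩ := ht
  have htIcc : t ∈ Set.Icc (0:ℝ) T := ⟨ht0, htT.le⟩
  set l : Filter ℝ := 𝓝[Set.Ioc (0:ℝ) (T - t)] 0 with hl
  -- nonemptiness and nonnegativity of C
  have hΩ : Nonempty Ω := by
    by_contra hΩ
    rw [not_nonempty_iff] at hΩ
    have h1 := measure_univ (μ := P)
    rw [Set.univ_eq_empty_iff.2 hΩ, measure_empty] at h1
    exact zero_ne_one h1
  have hC0 : (0:ℝ) ≤ C := le_trans (abs_nonneg _) (hHbd 0 (Classical.arbitrary Ω))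
  -- section measurability
  have hμt_meas : Measurable (μ t) := hμmeas.of_uncurry_left
  have hHt_meas : Measurable (H t) := hHmeas.of_uncurry_left
  have hμsec : ∀ ω, Measurable fun u => μ u ω := fun ω => hμmeas.of_uncurry_right
  have hHsec : ∀ ω, Measurable fun u => H u ω := fun ω => hHmeas.of_uncurry_right
  -- ψ
  set ψ : ℝ → ℝ := fun u => ∫ ω, |μ u ω - μ t ω| ∂P with hψ
  have hψ_nonneg : ∀ u, 0 ≤ ψ u := fun u => integral_nonneg fun ω => abs_nonneg _
  have hψ_meas : StronglyMeasurable ψ := by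
    exact StronglyMeasurable.integral_prod_right
      (f := fun u ω => |μ u ω - μ t ω|)
      ((hμmeas.sub (hμt_meas.comp measurable_snd)).abs.stronglyMeasurable)
  -- choose δ₀ with ψ < 1 near t
  have hψt : Tendsto ψ (𝓝[Set.Icc (0:ℝ) T] t) (𝓝 0) := hμL1 t htIcc
  have hev : ∀ᶠ u in 𝓝[Set.Icc (0:ℝ) T] t, ψ u < 1 :=
    hψt.eventually (eventually_lt_nhds one_pos)
  rw [eventually_nhdsWithin_iff, Metric.eventually_nhds_iff] at hev
  obtain ⟨δ₀, hδ₀pos, hδ₀⟩ := hev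
  set M : ℝ := (∫ ω, |μ t ω| ∂P) + 1 with hM
  have hMbound : ∀ u ∈ Set.Icc (0:ℝ) T, dist u t < δ₀ → ∫ ω, |μ u ω| ∂P ≤ M := by
    intro u hu hd
    have h1 : ψ u < 1 := hδ₀ hd hu
    have h2 : ∫ ω, |μ u ω| ∂P ≤ ψ u + ∫ ω, |μ t ω| ∂P := by
      have h3 : ∫ ω, |μ u ω| ∂P ≤ ∫ ω, (|μ u ω - μ t ω| + |μ t ω|) ∂P := by
        refine integral_mono (hμint u).abs
          (((hμint u).sub (hμint t)).abs.add (hμint t).abs) fun ω => ?_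
        have := abs_sub_abs_le_abs_sub (μ u ω) (μ t ω)
        simp only [Pi.add_apply]
        linarith
      have h4 : ∫ ω, (|μ u ω - μ t ω| + |μ t ω|) ∂P = ψ u + ∫ ω, |μ t ω| ∂P :=
        integral_add ((hμint u).sub (hμint t)).abs (hμint t).abs
      linarith
    rw [hM]; linarith
  -- the key eventual bound
  have key : ∀ h : ℝ, 0 < h → h ≤ T - t → h < δ₀ →
      (∫ ω, |(P[(fun ω' => ∫ u in t..(t + h), (H u ω' - H t ω') * μ u ω') | ℱ t]) ω| ∂P) / h ≤
        2*C*(∫ u in t..(t+h), ψ u) / h +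
          ∫ ω, ((∫ u in t..(t+h), |H u ω - H t ω|) / h) * |μ t ω| ∂P := by
    intro h hh0 hhT hhδ
    have hle : t ≤ t + h := by linarith
    set s : Set ℝ := Set.Ioc t (t + h) with hsdef
    have hsmeas : MeasurableSet s := measurableSet_Ioc
    have hsfin : volume s ≠ ⊤ := (measure_Ioc_lt_top).ne
    haveI : IsFiniteMeasure (volume.restrict s) :=
      ⟨by rw [Measure.restrict_apply_univ]; exact measure_Ioc_lt_top⟩
    have hvols : (volume s).toReal = h := by
      rw [hsdef, Real.volume_Ioc]
      simp [ENNReal.toReal_ofReal hh0.le]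
    have hsub : ∀ u ∈ s, u ∈ Set.Icc (0:ℝ) T ∧ dist u t < δ₀ := by
      intro u hu
      obtain ⟨hu1, hu2⟩ := hu
      constructor
      · constructor <;> [linarith; linarith]
      · rw [Real.dist_eq, abs_of_pos (by linarith : (0:ℝ) < u - t)]
        linarith
    -- product integrability of μ
    have prodμ : Integrable (fun p : ℝ × Ω => μ p.1 p.2) ((volume.restrict s).prod P) :=
      aux_prod_integrable P μ hμmeas hμint s hsmeas hsfin M
        (fun u hu => hMbound u (hsub u hu).1 (hsub u hu).2)
    have prodμt : Integrable (fun p : ℝ × Ω => μ t p.2) ((volume.restrict s).prod P) := by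
      refine (integrable_prod_iff
        (f := fun p : ℝ × Ω => μ t p.2)
        (hμt_meas.comp measurable_snd).aestronglyMeasurable).mpr
        ⟨Eventually.of_forall fun u => hμint t, ?_⟩
      exact integrable_const ((∫ ω, ‖μ t ω‖ ∂P) : ℝ)
    have prodΔμ := (prodμ.sub prodμt).abs
    -- g on the product
    have prodg : Integrable (fun p : ℝ × Ω => (H p.1 p.2 - H t p.2) * μ p.1 p.2)
        ((volume.restrict s).prod P) := by
      refine Integrable.bdd_mul prodμ
        ((hHmeas.sub (hHt_meas.comp measurable_snd)).aestronglyMeasurable) (c := 2*C) (Eventually.of_forall fun p => ?_)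
      rw [Real.norm_eq_abs]
      calc |H p.1 p.2 - H t p.2| ≤ |H p.1 p.2| + |H t p.2| := abs_sub _ _
        _ ≤ C + C := add_le_add (hHbd _ _) (hHbd _ _)
        _ = 2*C := by ring
    -- X integrable
    have hXrw : ∀ ω : Ω, (∫ u in t..(t + h), (H u ω - H t ω) * μ u ω) =
        ∫ u in s, (H u ω - H t ω) * μ u ω := by
      intro ω; rw [intervalIntegral.integral_of_le hle]
    have Xint : Integrable (fun ω => ∫ u in t..(t + h), (H u ω - H t ω) * μ u ω) P := by
      have := prodg.swap.integral_prod_left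
      refine this.congr (Eventually.of_forall fun ω => ?_)
      exact (hXrw ω).symm
    -- pathwise bound
    have hptwise : ∀ᵐ ω ∂P,
        |∫ u in t..(t + h), (H u ω - H t ω) * μ u ω| ≤
          (∫ u in s, 2*C*|μ u ω - μ t ω|) + (∫ u in s, |H u ω - H t ω|) * |μ t ω| := by
      filter_upwards [prodμ.prod_left_ae] with ω hωint
      have hΔμint : Integrable (fun u => |μ u ω - μ t ω|) (volume.restrict s) :=
        (hωint.sub (integrable_const _)).abs
      have hΔHint : Integrable (fun u => |H u ω - H t ω|) (volume.restrict s) := by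
        refine Integrable.mono' (integrable_const (2*C))
          ((hHsec ω).sub measurable_const).abs.aestronglyMeasurable
          (Eventually.of_forall fun u => ?_)
        rw [Real.norm_eq_abs, abs_abs]
        calc |H u ω - H t ω| ≤ |H u ω| + |H t ω| := abs_sub _ _
          _ ≤ C + C := add_le_add (hHbd _ _) (hHbd _ _)
          _ = 2*C := by ring
      rw [hXrw ω]
      calc |∫ u in s, (H u ω - H t ω) * μ u ω|
          ≤ ∫ u in s, |H u ω - H t ω| * |μ u ω| := by
            simpa [Real.norm_eq_abs, abs_mul] using
              norm_integral_le_integral_norm (μ := volume.restrict s)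
                (fun u => (H u ω - H t ω) * μ u ω)
        _ ≤ ∫ u in s, (2*C*|μ u ω - μ t ω| + |H u ω - H t ω| * |μ t ω|) := by
            refine integral_mono ?_ ?_ fun u => ?_
            · refine Integrable.mono' (hωint.abs.const_mul (2*C))
                (((hHsec ω).sub measurable_const).abs.mul
                  (hμsec ω).abs).aestronglyMeasurable
                (Eventually.of_forall fun u => ?_)
              rw [Real.norm_eq_abs,
                abs_of_nonneg (mul_nonneg (abs_nonneg _) (abs_nonneg _))]
              have h1 : |H u ω - H t ω| ≤ 2*C := by
                calc |H u ω - H t ω| ≤ |H u ω| + |H t ω| := abs_sub _ _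
                  _ ≤ C + C := add_le_add (hHbd _ _) (hHbd _ _)
                  _ = 2*C := by ring
              exact mul_le_mul_of_nonneg_right h1 (abs_nonneg _)
            · exact (hΔμint.const_mul (2*C)).add (hΔHint.mul_const _)
            · have h1 : |H u ω - H t ω| ≤ 2*C := by
                calc |H u ω - H t ω| ≤ |H u ω| + |H t ω| := abs_sub _ _
                  _ ≤ C + C := add_le_add (hHbd _ _) (hHbd _ _)
                  _ = 2*C := by ring
              have h2 : |μ u ω| ≤ |μ u ω - μ t ω| + |μ t ω| := by
                have := abs_sub_abs_le_abs_sub (μ u ω) (μ t ω)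
                linarith [abs_sub_abs_le_abs_sub (μ u ω) (μ t ω)]
              calc |H u ω - H t ω| * |μ u ω|
                  ≤ |H u ω - H t ω| * (|μ u ω - μ t ω| + |μ t ω|) :=
                    mul_le_mul_of_nonneg_left h2 (abs_nonneg _)
                _ = |H u ω - H t ω| * |μ u ω - μ t ω| + |H u ω - H t ω| * |μ t ω| := by ring
                _ ≤ 2*C*|μ u ω - μ t ω| + |H u ω - H t ω| * |μ t ω| := by
                    have := mul_le_mul_of_nonneg_right h1 (abs_nonneg (μ u ω - μ t ω))
                    linarith
        _ = (∫ u in s, 2*C*|μ u ω - μ t ω|) + (∫ u in s, |H u ω - H t ω|) * |μ t ω| := by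
            rw [integral_add (hΔμint.const_mul (2*C)) (hΔHint.mul_const _),
              integral_mul_const]
    -- integrability of the two bound terms
    have hYint : Integrable (fun ω => ∫ u in s, 2*C*|μ u ω - μ t ω|) P := by
      have := ((prodΔμ.const_mul (2*C)).swap).integral_prod_left
      exact this.congr (Eventually.of_forall fun ω => rfl)
    have hZmeas : StronglyMeasurable (fun ω => ∫ u in s, |H u ω - H t ω|) := by
      exact StronglyMeasurable.integral_prod_right
        (f := fun ω u => |H u ω - H t ω|)
        (((hHmeas.comp measurable_swap).sub (hHt_meas.comp measurable_fst)).abs.stronglyMeasurable)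
    have hZbd : ∀ ω, ‖∫ u in s, |H u ω - H t ω|‖ ≤ 2*C*h := by
      intro ω
      have hΔHint : Integrable (fun u => |H u ω - H t ω|) (volume.restrict s) := by
        refine Integrable.mono' (integrable_const (2*C))
          ((hHsec ω).sub measurable_const).abs.aestronglyMeasurable
          (Eventually.of_forall fun u => ?_)
        rw [Real.norm_eq_abs, abs_abs]
        calc |H u ω - H t ω| ≤ |H u ω| + |H t ω| := abs_sub _ _
          _ ≤ C + C := add_le_add (hHbd _ _) (hHbd _ _)
          _ = 2*C := by ring
      rw [Real.norm_eq_abs, abs_of_nonneg (integral_nonneg fun u => abs_nonneg _)]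
      calc (∫ u in s, |H u ω - H t ω|) ≤ ∫ u in s, (2*C : ℝ) := by
            refine integral_mono hΔHint (integrable_const _) fun u => ?_
            calc |H u ω - H t ω| ≤ |H u ω| + |H t ω| := abs_sub _ _
              _ ≤ C + C := add_le_add (hHbd _ _) (hHbd _ _)
              _ = 2*C := by ring
        _ = 2*C*h := by
            rw [setIntegral_const, smul_eq_mul, measureReal_def, hvols]; ring
    have hZint : Integrable (fun ω => (∫ u in s, |H u ω - H t ω|) * |μ t ω|) P :=
      Integrable.bdd_mul (hμint t).abs hZmeas.aestronglyMeasurable (c := 2*C*h) (Eventually.of_forall hZbd)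
    -- Fubini for the Y term
    have hYswap : (∫ ω, (∫ u in s, 2*C*|μ u ω - μ t ω|) ∂P) = 2*C*(∫ u in s, ψ u) := by
      have hswap := integral_integral_swap
        (f := fun ω u => 2*C*|μ u ω - μ t ω|) (μ := P) (ν := volume.restrict s)
        (by exact (prodΔμ.const_mul (2*C)).swap)
      calc (∫ ω, (∫ u in s, 2*C*|μ u ω - μ t ω|) ∂P)
          = ∫ u in s, (∫ ω, 2*C*|μ u ω - μ t ω| ∂P) := hswap
        _ = ∫ u in s, 2*C*ψ u := by
            refine integral_congr_ae (Eventually.of_forall fun u => ?_)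
            exact integral_const_mul (2*C) _
        _ = 2*C*(∫ u in s, ψ u) := integral_const_mul _ _
    -- assemble
    have step1 : (∫ ω, |(P[(fun ω' => ∫ u in t..(t + h), (H u ω' - H t ω') * μ u ω') | ℱ t]) ω| ∂P)
        ≤ ∫ ω, |∫ u in t..(t + h), (H u ω - H t ω) * μ u ω| ∂P :=
      integral_abs_condExp_le _
    have step2 : (∫ ω, |∫ u in t..(t + h), (H u ω - H t ω) * μ u ω| ∂P) ≤
        2*C*(∫ u in s, ψ u) + ∫ ω, (∫ u in s, |H u ω - H t ω|) * |μ t ω| ∂P := by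
      rw [← hYswap, ← integral_add hYint hZint]
      exact integral_mono_ae Xint.abs (hYint.add hZint) hptwise
    have hsint : (∫ u in t..(t+h), ψ u) = ∫ u in s, ψ u := intervalIntegral.integral_of_le hle
    have hdiv : (∫ ω, (∫ u in s, |H u ω - H t ω|) * |μ t ω| ∂P) / h =
        ∫ ω, ((∫ u in t..(t+h), |H u ω - H t ω|) / h) * |μ t ω| ∂P := by
      rw [← integral_div]
      refine integral_congr_ae (Eventually.of_forall fun ω => ?_)
      simp only [intervalIntegral.integral_of_le hle]
      ring
    rw [hsint, ← hdiv, ← add_div]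
    exact (div_le_div_iff_of_pos_right hh0).mpr (le_trans step1 step2)
  -- Tendsto of the A-term
  have hA : Tendsto (fun h : ℝ => 2*C*(∫ u in t..(t+h), ψ u) / h) l (𝓝 0) := by
    rw [Metric.tendsto_nhds]
    intro ε hε
    set ε' : ℝ := ε / (2*C + 1) with hε'
    have hε'pos : 0 < ε' := div_pos hε (by linarith)
    have hev2 : ∀ᶠ u in 𝓝[Set.Icc (0:ℝ) T] t, ψ u < ε' :=
      hψt.eventually (eventually_lt_nhds hε'pos)
    rw [eventually_nhdsWithin_iff, Metric.eventually_nhds_iff] at hev2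
    obtain ⟨δ, hδpos, hδ⟩ := hev2
    filter_upwards [self_mem_nhdsWithin,
      Filter.Eventually.filter_mono nhdsWithin_le_nhds (eventually_lt_nhds hδpos)]
      with h hmem hhδ
    obtain ⟨hh0, hhT⟩ := hmem
    have hle : t ≤ t + h := by linarith
    have hψub : ∀ u ∈ Set.Ioc t (t+h), ψ u ≤ ε' := by
      intro u hu
      obtain ⟨hu1, hu2⟩ := hu
      refine (hδ ?_ ?_).le
      · rw [Real.dist_eq, abs_of_pos (by linarith : (0:ℝ) < u - t)]; linarith
      · exact ⟨by linarith, by linarith⟩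
    have hψint : IntegrableOn ψ (Set.Ioc t (t+h)) volume := by
      refine Integrable.mono' (integrable_const ε') hψ_meas.aestronglyMeasurable
        ((ae_restrict_iff' measurableSet_Ioc).2 (Eventually.of_forall fun u hu => ?_))
      rw [Real.norm_eq_abs, abs_of_nonneg (hψ_nonneg u)]
      exact hψub u hu
    have hIb : (∫ u in t..(t+h), ψ u) ≤ ε' * h := by
      rw [intervalIntegral.integral_of_le hle]
      calc (∫ u in Set.Ioc t (t+h), ψ u) ≤ ∫ _u in Set.Ioc t (t+h), ε' :=
            setIntegral_mono_on hψint (integrable_const _) measurableSet_Ioc hψub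
        _ = ε' * h := by
            rw [setIntegral_const, smul_eq_mul, measureReal_def, Real.volume_Ioc,
              ENNReal.toReal_ofReal (by linarith : (0:ℝ) ≤ t + h - t)]
            ring
    have hInn : (0:ℝ) ≤ ∫ u in t..(t+h), ψ u :=
      intervalIntegral.integral_nonneg hle fun u _ => hψ_nonneg u
    have hval : 2*C*(∫ u in t..(t+h), ψ u) / h ≤ 2*C*ε' := by
      rw [div_le_iff₀ hh0]
      nlinarith [mul_le_mul_of_nonneg_left hIb (by linarith : (0:ℝ) ≤ 2*C)]
    have hfin : 2*C*ε' < ε := by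
      rw [hε']
      rw [← mul_div_assoc, div_lt_iff₀ (by linarith : (0:ℝ) < 2*C+1)]
      nlinarith
    rw [Real.dist_eq, sub_zero,
      abs_of_nonneg (by positivity : (0:ℝ) ≤ 2*C*(∫ u in t..(t+h), ψ u) / h)]
    linarith
  -- Tendsto of the B-term via dominated convergence
  have hB : Tendsto
      (fun h : ℝ => ∫ ω, ((∫ u in t..(t+h), |H u ω - H t ω|) / h) * |μ t ω| ∂P) l (𝓝 0) := by
    have hdct := tendsto_integral_filter_of_dominated_convergence (μ := P) (l := l)
      (F := fun h ω => ((∫ u in t..(t+h), |H u ω - H t ω|) / h) * |μ t ω|)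
      (f := fun _ => (0:ℝ)) (bound := fun ω => 2*C*|μ t ω|)
      ?_ ?_ ?_ ?_
    · simpa using hdct
    · -- measurability
      filter_upwards [self_mem_nhdsWithin] with h hmem
      obtain ⟨hh0, hhT⟩ := hmem
      have hle : t ≤ t + h := by linarith
      have hm1 : StronglyMeasurable
          (fun ω => ∫ u in Set.Ioc t (t+h), |H u ω - H t ω|) :=
        StronglyMeasurable.integral_prod_right
          (f := fun ω u => |H u ω - H t ω|)
          (((hHmeas.comp measurable_swap).sub
            (hHt_meas.comp measurable_fst)).abs.stronglyMeasurable)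
      refine AEStronglyMeasurable.congr
        (((hm1.measurable.div_const h).mul hμt_meas.abs).aestronglyMeasurable) ?_
      exact Eventually.of_forall fun ω => by
        simp [intervalIntegral.integral_of_le hle]
    · -- bound
      filter_upwards [self_mem_nhdsWithin] with h hmem
      obtain ⟨hh0, hhT⟩ := hmem
      have hle : t ≤ t + h := by linarith
      refine Eventually.of_forall fun ω => ?_
      have hΔHint : Integrable (fun u => |H u ω - H t ω|)
          (volume.restrict (Set.Ioc t (t+h))) := by
        refine Integrable.mono' (integrable_const (2*C))
          ((hHsec ω).sub measurable_const).abs.aestronglyMeasurable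
          (Eventually.of_forall fun u => ?_)
        rw [Real.norm_eq_abs, abs_abs]
        calc |H u ω - H t ω| ≤ |H u ω| + |H t ω| := abs_sub _ _
          _ ≤ C + C := add_le_add (hHbd _ _) (hHbd _ _)
          _ = 2*C := by ring
      have hI0 : (0:ℝ) ≤ ∫ u in t..(t+h), |H u ω - H t ω| :=
        intervalIntegral.integral_nonneg hle fun u _ => abs_nonneg _
      have hIub : (∫ u in t..(t+h), |H u ω - H t ω|) ≤ 2*C*h := by
        rw [intervalIntegral.integral_of_le hle]
        calc (∫ u in Set.Ioc t (t+h), |H u ω - H t ω|)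
            ≤ ∫ _u in Set.Ioc t (t+h), (2*C:ℝ) := by
              refine setIntegral_mono_on hΔHint (integrable_const _)
                measurableSet_Ioc fun u _ => ?_
              calc |H u ω - H t ω| ≤ |H u ω| + |H t ω| := abs_sub _ _
                _ ≤ C + C := add_le_add (hHbd _ _) (hHbd _ _)
                _ = 2*C := by ring
          _ = 2*C*h := by
              rw [setIntegral_const, smul_eq_mul, measureReal_def, Real.volume_Ioc,
                ENNReal.toReal_ofReal (by linarith : (0:ℝ) ≤ t + h - t)]
              ring
      rw [Real.norm_eq_abs, abs_mul, abs_abs,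
        abs_of_nonneg (div_nonneg hI0 hh0.le)]
      refine mul_le_mul_of_nonneg_right ?_ (abs_nonneg _)
      rw [div_le_iff₀ hh0]
      linarith
    · exact (hμint t).abs.const_mul (2*C)
    · -- a.e. pointwise convergence
      filter_upwards [hHcont] with ω hcont
      have h1 : Tendsto (fun h : ℝ => (∫ u in t..(t+h), |H u ω - H t ω|) / h) l (𝓝 0) := by
        rw [Metric.tendsto_nhds]
        intro ε hε
        have hc : ContinuousWithinAt (fun u => H u ω) (Set.Icc 0 T) t := hcont t htIcc
        rw [Metric.continuousWithinAt_iff] at hc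
        obtain ⟨δ, hδpos, hδ⟩ := hc (ε/2) (by linarith)
        filter_upwards [self_mem_nhdsWithin,
          Filter.Eventually.filter_mono nhdsWithin_le_nhds (eventually_lt_nhds hδpos)]
          with h hmem hhδ
        obtain ⟨hh0, hhT⟩ := hmem
        have hle : t ≤ t + h := by linarith
        have hΔHint : Integrable (fun u => |H u ω - H t ω|)
            (volume.restrict (Set.Ioc t (t+h))) := by
          refine Integrable.mono' (integrable_const (2*C))
            ((hHsec ω).sub measurable_const).abs.aestronglyMeasurable
            (Eventually.of_forall fun u => ?_)
          rw [Real.norm_eq_abs, abs_abs]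
          calc |H u ω - H t ω| ≤ |H u ω| + |H t ω| := abs_sub _ _
            _ ≤ C + C := add_le_add (hHbd _ _) (hHbd _ _)
            _ = 2*C := by ring
        have hI0 : (0:ℝ) ≤ ∫ u in t..(t+h), |H u ω - H t ω| :=
          intervalIntegral.integral_nonneg hle fun u _ => abs_nonneg _
        have hIub : (∫ u in t..(t+h), |H u ω - H t ω|) ≤ (ε/2)*h := by
          rw [intervalIntegral.integral_of_le hle]
          calc (∫ u in Set.Ioc t (t+h), |H u ω - H t ω|)
              ≤ ∫ _u in Set.Ioc t (t+h), (ε/2:ℝ) := by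
                refine setIntegral_mono_on hΔHint (integrable_const _)
                  measurableSet_Ioc fun u hu => ?_
                obtain ⟨hu1, hu2⟩ := hu
                refine le_of_lt ?_
                have := hδ (x := u) ⟨by linarith, by linarith⟩
                  (by rw [Real.dist_eq, abs_of_pos (by linarith : (0:ℝ) < u - t)]; linarith)
                rwa [Real.dist_eq] at this
            _ = (ε/2)*h := by
                rw [setIntegral_const, smul_eq_mul, measureReal_def, Real.volume_Ioc,
                  ENNReal.toReal_ofReal (by linarith : (0:ℝ) ≤ t + h - t)]
                ring
        rw [Real.dist_eq, sub_zero, abs_of_nonneg (div_nonneg hI0 hh0.le)]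
        rw [div_lt_iff₀ hh0]
        nlinarith
      have := h1.mul_const |μ t ω|
      simpa using this
  -- squeeze
  refine squeeze_zero' ?_ ?_ (by simpa using hA.add hB)
  · filter_upwards [self_mem_nhdsWithin] with h hmem
    exact div_nonneg (integral_nonneg fun ω => abs_nonneg _) hmem.1.le
  · filter_upwards [self_mem_nhdsWithin,
      Filter.Eventually.filter_mono nhdsWithin_le_nhds (eventually_lt_nhds hδ₀pos)]
      with h hmem hhδ
    exact key h hmem.1 hmem.2 hhδ
end
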